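/- Let Y be a random variable taking values in a finite set {y_1,…,y_n} ⊂ S ⊆ ℝ^k with probability measure v such that μ := E_v[Y] ∈ ri(S). Then for any Bregman divergence d_φ, the function s ↦ E_v[d_φ(Y, s)] over s ∈ ri(S) has the unique minimizer s* = μ. -/

import Mathlib

open scoped RealInnerProductSpace BigOperators

/-- The Bregman divergence associated to a convex function `φ` with gradient map `g`. -/
noncomputable def bregman {k : ℕ} (φ : EuclideanSpace ℝ (Fin k) → ℝ)
    (g : EuclideanSpace ℝ (Fin k) → EuclideanSpace ℝ (Fin k))
    (p q : EuclideanSpace ℝ (Fin k)) : ℝ :=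
  φ p - φ q - ⟪p - q, g q⟫

open Filter Topology in
/-- Strict gradient inequality for a strictly convex function. -/
lemma strict_grad {k : ℕ} {S : Set (EuclideanSpace ℝ (Fin k))}
    {φ : EuclideanSpace ℝ (Fin k) → ℝ} {G x z : EuclideanSpace ℝ (Fin k)}
    (hφ : StrictConvexOn ℝ S φ) (hx : x ∈ S) (hz : z ∈ S) (hxz : z ≠ x)
    (hgrad : HasGradientAt φ G x) :
    φ x + ⟪G, z - x⟫ < φ z := by
  set m : EuclideanSpace ℝ (Fin k) := (1/2 : ℝ) • x + (1/2 : ℝ) • z with hm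
  have hmS : m ∈ S := hφ.1 hx hz (by norm_num) (by norm_num) (by norm_num)
  have hmid : φ m < (1/2) * φ x + (1/2) * φ z :=
    hφ.2 hx hz (Ne.symm hxz) (by norm_num) (by norm_num) (by norm_num)
  set f : ℝ → ℝ := fun t => φ (x + t • (z - x)) with hf
  have hL : HasDerivAt (fun t : ℝ => x + t • (z - x)) (z - x) 0 := by
    simpa using ((hasDerivAt_id (0:ℝ)).smul_const (z - x)).const_add x
  have hd : HasDerivAt f ⟪G, z - x⟫ 0 := by
    have hg' : HasFDerivAt φ ((InnerProductSpace.toDual ℝ (EuclideanSpace ℝ (Fin k))) G)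
        (x + (0:ℝ) • (z - x)) := by simpa using hgrad.hasFDerivAt
    have h2 := hg'.comp_hasDerivAt 0 hL
    simp at h2
    exact h2
  have hslope : ∀ t ∈ Set.Ioc (0:ℝ) (1/2), slope f 0 t ≤ 2 * (φ m - φ x) := by
    intro t ht
    have hcomb : φ ((1 - 2*t) • x + (2*t) • m) ≤ (1 - 2*t) * φ x + (2*t) * φ m :=
      hφ.convexOn.2 hx hmS (by linarith [ht.2]) (by linarith [ht.1]) (by ring)
    have hpt : (1 - 2*t) • x + (2*t) • m = x + t • (z - x) := by
      rw [hm]; module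
    rw [hpt] at hcomb
    have ht0 : (0:ℝ) < t := ht.1
    rw [slope_def_field]
    simp only [hf, zero_smul, add_zero, sub_zero]
    rw [div_le_iff₀ ht0]
    nlinarith [hcomb]
  have htend : Tendsto (slope f 0) (𝓝[>] (0:ℝ)) (𝓝 ⟪G, z - x⟫) :=
    (hasDerivAt_iff_tendsto_slope.mp hd).mono_left
      (nhdsWithin_mono 0 (fun t ht => ne_of_gt ht))
  have hle : ⟪G, z - x⟫ ≤ 2 * (φ m - φ x) := by
    refine le_of_tendsto htend ?_
    filter_upwards [Ioc_mem_nhdsGT_of_mem (by norm_num : (0:ℝ) ∈ Set.Ico (0:ℝ) (1/2))] with t ht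
    exact hslope t ht
  have hf1 : f 1 = φ z := by simp [hf]
  linarith

/-- the expectation `μ` of a finitely supported random variable `Y` is the
unique minimizer over `ri(S)` of `s ↦ E[d_φ(Y, s)]`. -/
theorem bregman_mean_unique_minimizer {k n : ℕ}
    (S : Set (EuclideanSpace ℝ (Fin k))) (hS : Convex ℝ S)
    (φ : EuclideanSpace ℝ (Fin k) → ℝ)
    (g : EuclideanSpace ℝ (Fin k) → EuclideanSpace ℝ (Fin k))
    (hφ : StrictConvexOn ℝ S φ)
    (hg : ∀ q ∈ intrinsicInterior ℝ S, HasGradientAt φ (g q) q)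
    (y : Fin n → EuclideanSpace ℝ (Fin k)) (hy : ∀ i, y i ∈ S)
    (v : Fin n → ℝ) (hv : ∀ i, 0 ≤ v i) (hv1 : ∑ i, v i = 1)
    (μ : EuclideanSpace ℝ (Fin k)) (hμdef : μ = ∑ i, v i • y i)
    (hμ : μ ∈ intrinsicInterior ℝ S) :
    ∀ s ∈ intrinsicInterior ℝ S, s ≠ μ →
      ∑ i, v i * bregman φ g (y i) μ < ∑ i, v i * bregman φ g (y i) s := by
  intro s hs hsμ
  have inner_sum : ∀ c : EuclideanSpace ℝ (Fin k),
      ∑ i, v i * ⟪y i - c, g c⟫ = ⟪μ - c, g c⟫ := by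
    intro c
    have h1 : ∑ i, v i * ⟪y i - c, g c⟫ = ⟪∑ i, v i • (y i - c), g c⟫ := by
      rw [sum_inner]
      simp only [real_inner_smul_left]
    rw [h1]
    congr 1
    calc ∑ i, v i • (y i - c) = (∑ i, v i • y i) - (∑ i, v i) • c := by
          rw [Finset.sum_smul]
          simp [smul_sub, Finset.sum_sub_distrib]
      _ = μ - c := by rw [hv1, one_smul, ← hμdef]
  have key : ∀ c : EuclideanSpace ℝ (Fin k), ∑ i, v i * bregman φ g (y i) c
      = (∑ i, v i * φ (y i)) - φ c - ⟪μ - c, g c⟫ := by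
    intro c
    simp only [bregman, mul_sub]
    rw [Finset.sum_sub_distrib, Finset.sum_sub_distrib, ← Finset.sum_mul, hv1, one_mul,
      inner_sum]
  rw [key s, key μ]
  have hz : ⟪μ - μ, g μ⟫ = (0:ℝ) := by simp
  rw [hz]
  have hsS : s ∈ S := intrinsicInterior_subset hs
  have hμS : μ ∈ S := intrinsicInterior_subset hμ
  have h := strict_grad hφ hsS hμS hsμ.symm (hg s hs)
  have hcomm : ⟪μ - s, g s⟫ = ⟪g s, μ - s⟫ := real_inner_comm _ _
  linarith [h, hcomm.symm ▸ h]
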